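/- arXiv:1704.06989 — 2 statements merged into one kernel-verified Lean document; each statement's English description precedes it below -/
import Mathlib

section
/- Key Gagliardo–Nirenberg interpolation step: there is a constant C such that for every f ∈ W^{2,2}(T³) ∩ L^∞(T³) and each coordinate direction α, ‖∂_α f‖_{L⁴}² ≤ C ‖f‖_{L^∞} ‖f‖_{W^{2,2}}. -/
open MeasureTheory

noncomputable section

abbrev V3 := Fin 3 → ℝ

/-- The cube `[0,L]^3`, a fundamental domain for the torus `T^3 = [0,L]^3`. -/
def Q3 (L : ℝ) : Set V3 := Set.univ.pi fun _ => Set.Icc 0 L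

/-- Partial derivative `∂_j g` of a scalar function on `ℝ^3`. -/
def pd (j : Fin 3) (g : V3 → ℝ) (x : V3) : ℝ := fderiv ℝ g x (Pi.single j 1)

/-- `f` is `L`-periodic in each coordinate direction (i.e. a field on the torus). -/
def Periodic3 (L : ℝ) (f : V3 → V3) : Prop :=
  ∀ (x : V3) (i : Fin 3), f (x + Pi.single i L) = f x

/-- Divergence-free vector field: `∑_j ∂_j ξ^j = 0`. -/
def DivFree (ξ : V3 → V3) : Prop := ∀ x : V3, ∑ j : Fin 3, pd j (fun y => ξ y j) x = 0

/-- Lie derivative (Lie bracket) `L_ξ f = (ξ·∇)f − (f·∇)ξ`, componentwise. -/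
def lieD (ξ f : V3 → V3) : V3 → V3 := fun x i =>
  ∑ j : Fin 3, (ξ x j * pd j (fun y => f y i) x - f x j * pd j (fun y => ξ y i) x)

/-- `L²` inner product `⟨f,g⟩ = ∫_{T³} f·g dx` over the fundamental domain. -/
def ipT (L : ℝ) (f g : V3 → V3) : ℝ := ∫ x in Q3 L, ∑ i : Fin 3, f x i * g x i

/-- Zero order (multiplication) operator `(S₂ f)_i = −∑_j (∂_i ξ^j + ∂_j ξ^i) f_j`. -/
def S2op (ξ f : V3 → V3) : V3 → V3 := fun x i =>
  -∑ j : Fin 3, (pd i (fun y => ξ y j) x + pd j (fun y => ξ y i) x) * f x j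

/-- Componentwise Laplacian. -/
def lapD (f : V3 → V3) : V3 → V3 := fun x i => ∑ j : Fin 3, pd j (pd j (fun y => f y i)) x

/-- Sup (L^∞) norm of a vector field. -/
def supN (f : V3 → V3) : ℝ := ⨆ x : V3, ‖f x‖

/-- Sup norm of the gradient. -/
def gradSup (f : V3 → V3) : ℝ := ⨆ x : V3, ‖fderiv ℝ f x‖

/-- `L²` norm over the torus. -/
def l2N (L : ℝ) (f : V3 → V3) : ℝ := Real.sqrt (∫ x in Q3 L, ‖f x‖ ^ 2)

/-- `W^{2,2}` Sobolev norm over the torus. -/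
def w22N (L : ℝ) (f : V3 → V3) : ℝ :=
  Real.sqrt (∫ x in Q3 L,
    (‖f x‖ ^ 2 + ‖fderiv ℝ f x‖ ^ 2 + ‖iteratedFDeriv ℝ 2 f x‖ ^ 2))

/-- `W^{3,2}` Sobolev norm over the torus. -/
def w32N (L : ℝ) (f : V3 → V3) : ℝ :=
  Real.sqrt (∫ x in Q3 L, ∑ k ∈ Finset.range 4, ‖iteratedFDeriv ℝ k f x‖ ^ 2)

namespace GNaux

lemma Q3_eq (L : ℝ) : Q3 L = Set.Icc (0 : V3) (fun _ => L) := by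
  rw [← Set.pi_univ_Icc]; rfl

lemma isCompact_Q3 (L : ℝ) : IsCompact (Q3 L) :=
  isCompact_univ_pi fun _ => isCompact_Icc

lemma measurableSet_Q3 (L : ℝ) : MeasurableSet (Q3 L) :=
  MeasurableSet.univ_pi fun _ => measurableSet_Icc

lemma integrableOn_Q3 {u : V3 → ℝ} (hu : Continuous u) (L : ℝ) :
    IntegrableOn u (Q3 L) := by
  exact hu.continuousOn.integrableOn_compact (isCompact_Q3 L)

lemma fderiv_shift (f : V3 → ℝ) (hf : Differentiable ℝ f) (c : V3)
    (hc : ∀ x, f (x + c) = f x) (x : V3) :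
    fderiv ℝ f (x + c) = fderiv ℝ f x := by
  have h1 : HasFDerivAt (fun y : V3 => y + c) (ContinuousLinearMap.id ℝ V3) x :=
    (hasFDerivAt_id x).add_const c
  have h2 : HasFDerivAt (fun y : V3 => f (y + c))
      ((fderiv ℝ f (x + c)).comp (ContinuousLinearMap.id ℝ V3)) x :=
    (hf (x + c)).hasFDerivAt.comp x h1
  have h3 : (fun y : V3 => f (y + c)) = f := funext fun y => hc y
  rw [h3] at h2
  rw [show fderiv ℝ f (x + c) = (fderiv ℝ f (x + c)).comp (ContinuousLinearMap.id ℝ V3) from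
    (ContinuousLinearMap.comp_id _).symm, h2.fderiv]

lemma pd_shift {L : ℝ} (f : V3 → ℝ) (hf : Differentiable ℝ f)
    (hper : ∀ (x : V3) (i : Fin 3), f (x + Pi.single i L) = f x) (j : Fin 3) :
    ∀ (x : V3) (i : Fin 3), pd j f (x + Pi.single i L) = pd j f x := by
  intro x i
  unfold pd
  rw [fderiv_shift f hf (Pi.single i L) (fun y => hper y i) x]


lemma update_add_single {L : ℝ} (x : V3) (i : Fin 3) (t : ℝ) :
    Function.update x i (t + L) = Function.update x i t + Pi.single i L := by
  funext j
  by_cases hj : j = i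
  · subst hj; simp
  · simp [Function.update_apply, hj, Pi.single_eq_of_ne hj]

lemma reduce_coord {L : ℝ} (hL : 0 < L) (f : V3 → ℝ)
    (hper : ∀ (x : V3) (i : Fin 3), f (x + Pi.single i L) = f x) (x : V3) (i : Fin 3) :
    f (Function.update x i (x i - ⌊x i / L⌋ * L)) = f x := by
  have hperiodic : Function.Periodic (fun t => f (Function.update x i t)) L := by
    intro t
    show f (Function.update x i (t + L)) = f (Function.update x i t)
    rw [update_add_single (L := L) x i t, hper]
  have := hperiodic.sub_int_mul_eq (x := x i) ⌊x i / L⌋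
  simpa using this

lemma exists_rep {L : ℝ} (hL : 0 < L) (f : V3 → ℝ)
    (hper : ∀ (x : V3) (i : Fin 3), f (x + Pi.single i L) = f x) (x : V3) :
    ∃ y ∈ Q3 L, f y = f x := by
  classical
  set r : ℝ → ℝ := fun t => t - ⌊t / L⌋ * L with hr
  have hrmem : ∀ t, r t ∈ Set.Icc (0 : ℝ) L := fun t =>
    ⟨Int.sub_floor_div_mul_nonneg t hL, (Int.sub_floor_div_mul_lt t hL).le⟩
  set x1 := Function.update x 0 (r (x 0)) with hx1
  set x2 := Function.update x1 1 (r (x1 1)) with hx2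
  set x3 := Function.update x2 2 (r (x2 2)) with hx3
  refine ⟨x3, ?_, ?_⟩
  · intro j _
    fin_cases j <;>
      simp [x3, x2, x1, Function.update_apply, hrmem _, Set.mem_Icc]
  · rw [hx3, reduce_coord hL f hper, hx2, reduce_coord hL f hper, hx1,
      reduce_coord hL f hper]

lemma abs_le_sup {L : ℝ} (hL : 0 < L) (f : V3 → ℝ) (hf : Continuous f)
    (hper : ∀ (x : V3) (i : Fin 3), f (x + Pi.single i L) = f x) (x : V3) :
    |f x| ≤ ⨆ y : V3, |f y| := by
  have hbdd : BddAbove (Set.range fun y : V3 => |f y|) := by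
    have h1 : IsCompact ((fun y : V3 => |f y|) '' Q3 L) :=
      (isCompact_Q3 L).image (hf.abs)
    refine h1.bddAbove.mono ?_
    rintro - ⟨y, rfl⟩
    obtain ⟨z, hz, hfz⟩ := exists_rep hL f hper y
    exact ⟨z, hz, by simp [hfz]⟩
  exact le_ciSup hbdd x


lemma integral_pd_eq_zero (L : ℝ) (hL : 0 < L) (g : V3 → ℝ) (hg : ContDiff ℝ 1 g)
    (hper : ∀ (x : V3) (i : Fin 3), g (x + Pi.single i L) = g x) (α : Fin 3) :
    ∫ x in Q3 L, pd α g x = 0 := by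
  classical
  set b : Fin 3 → ℝ := fun _ => L with hb
  have hab : (0 : Fin 3 → ℝ) ≤ b := fun i => hL.le
  set Ls : ℝ →L[ℝ] (Fin 3 → ℝ) :=
    ContinuousLinearMap.pi (fun i => if i = α then ContinuousLinearMap.id ℝ ℝ else 0) with hLs
  have hLs_apply : ∀ (c : ℝ) (i : Fin 3), Ls c i = if i = α then c else 0 := by
    intro c i
    by_cases hi : i = α <;> simp [Ls, ContinuousLinearMap.pi_apply, hi]
  have hdiffg : Differentiable ℝ g := hg.differentiable one_ne_zero
  have hcont_pd : Continuous (pd α g) := by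
    have h1 : Continuous (fderiv ℝ g) := hg.continuous_fderiv one_ne_zero
    exact ((ContinuousLinearMap.apply ℝ ℝ (Pi.single α (1:ℝ))).continuous).comp h1
  have hdiv_eq : (fun x : V3 => ∑ i : Fin 3,
      (Ls.comp (fderiv ℝ g x)) (Pi.single i 1) i) = pd α g := by
    funext x
    have : ∀ i : Fin 3, (Ls.comp (fderiv ℝ g x)) (Pi.single i 1) i
        = if i = α then fderiv ℝ g x (Pi.single i 1) else 0 := by
      intro i
      simp [ContinuousLinearMap.comp_apply, hLs_apply]
    simp only [this]
    simp [pd, Finset.sum_ite_eq']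
  have Hi : IntegrableOn (fun x : V3 => ∑ i : Fin 3,
      (Ls.comp (fderiv ℝ g x)) (Pi.single i 1) i) (Set.Icc 0 b) := by
    rw [hdiv_eq]
    exact hcont_pd.continuousOn.integrableOn_compact isCompact_Icc
  have key := MeasureTheory.integral_divergence_of_hasFDerivAt_off_countable
      (n := 2) 0 b hab (fun x => Ls (g x)) (fun x => Ls.comp (fderiv ℝ g x)) ∅
      Set.countable_empty
      (Ls.continuous.comp hg.continuous).continuousOn
      (fun x _ => Ls.hasFDerivAt.comp x (hdiffg x).hasFDerivAt)
      Hi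
  have hfaces : ∑ i : Fin 3,
      ((∫ x in Set.Icc ((0:Fin 3 → ℝ) ∘ i.succAbove) (b ∘ i.succAbove),
          Ls (g (i.insertNth (b i) x)) i) -
        ∫ x in Set.Icc ((0:Fin 3 → ℝ) ∘ i.succAbove) (b ∘ i.succAbove),
          Ls (g (i.insertNth ((0:Fin 3 → ℝ) i) x)) i) = 0 := by
    refine Finset.sum_eq_zero fun i _ => ?_
    by_cases hi : i = α
    · subst hi
      have hins : ∀ x : Fin 2 → ℝ,
          (i.insertNth (0:ℝ) x : Fin 3 → ℝ) + Pi.single i L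
            = (i.insertNth (L:ℝ) x : Fin 3 → ℝ) := by
        intro x
        have hpt : ∀ j : Fin 3, ((i.insertNth (0:ℝ) x : Fin 3 → ℝ) j)
            + (Pi.single i L : Fin 3 → ℝ) j = (i.insertNth (L:ℝ) x : Fin 3 → ℝ) j := by
          refine Fin.succAboveCases i ?_ fun k => ?_
          · simp
          · simp [Fin.insertNth_apply_succAbove, Pi.single_eq_of_ne (Fin.succAbove_ne i k)]
        funext j
        exact hpt j
      have hgeq : ∀ x : Fin 2 → ℝ,
          g (i.insertNth (b i) x) = g (i.insertNth ((0:Fin 3 → ℝ) i) x) := by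
        intro x
        have h0 : ((0:Fin 3 → ℝ) i) = (0:ℝ) := rfl
        have hbL : b i = L := rfl
        rw [h0, hbL, ← hins x, hper]
      simp only [hLs_apply, if_pos rfl, hgeq, sub_self]
    · simp [hLs_apply, hi]
  rw [hfaces] at key
  rw [Q3_eq L, ← hdiv_eq]
  exact key


lemma pd_continuous {g : V3 → ℝ} (hg : ContDiff ℝ 1 g) (α : Fin 3) :
    Continuous (pd α g) := by
  exact (hg.continuous_fderiv one_ne_zero).clm_apply continuous_const

lemma pd_mul (u v : V3 → ℝ) (hu : Differentiable ℝ u) (hv : Differentiable ℝ v) (α : Fin 3)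
    (x : V3) :
    pd α (fun y => u y * v y) x = pd α u x * v x + u x * pd α v x := by
  have h := ((hu x).hasFDerivAt.mul (hv x).hasFDerivAt)
  rw [pd, show (fun y => u y * v y) = u * v from rfl, h.fderiv]
  simp [pd]
  ring

lemma integral_pd_mul (L : ℝ) (hL : 0 < L) (u v : V3 → ℝ)
    (hu : ContDiff ℝ 1 u) (hv : ContDiff ℝ 1 v)
    (hup : ∀ (x : V3) (i : Fin 3), u (x + Pi.single i L) = u x)
    (hvp : ∀ (x : V3) (i : Fin 3), v (x + Pi.single i L) = v x) (α : Fin 3) :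
    ∫ x in Q3 L, pd α u x * v x = - ∫ x in Q3 L, u x * pd α v x := by
  have hprod : ContDiff ℝ 1 (fun x => u x * v x) := hu.mul hv
  have hpp : ∀ (x : V3) (i : Fin 3),
      (fun y => u y * v y) (x + Pi.single i L) = (fun y => u y * v y) x := by
    intro x i; simp only [hup x i, hvp x i]
  have h0 := integral_pd_eq_zero L hL (fun x => u x * v x) hprod hpp α
  have hpdeq : (fun x => pd α (fun y => u y * v y) x)
      = fun x => pd α u x * v x + u x * pd α v x :=
    funext fun x => pd_mul u v (hu.differentiable one_ne_zero) (hv.differentiable one_ne_zero) α x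
  rw [hpdeq] at h0
  have h1 : IntegrableOn (fun x => pd α u x * v x) (Q3 L) :=
    integrableOn_Q3 ((pd_continuous hu α).mul hv.continuous) L
  have h2 : IntegrableOn (fun x => u x * pd α v x) (Q3 L) :=
    integrableOn_Q3 (hu.continuous.mul (pd_continuous hv α)) L
  rw [MeasureTheory.integral_add h1 h2] at h0
  linarith

lemma memL2_of_continuous (L : ℝ) {w : V3 → ℝ} (hw : Continuous w) :
    MemLp w (ENNReal.ofReal 2) (volume.restrict (Q3 L)) := by
  haveI : Fact (volume (Q3 L) < ⊤) := ⟨(isCompact_Q3 L).measure_lt_top⟩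
  obtain ⟨C, hC⟩ := (isCompact_Q3 L).exists_bound_of_continuousOn hw.continuousOn
  refine MemLp.of_bound (hw.aestronglyMeasurable.restrict) C ?_
  exact (ae_restrict_iff' (measurableSet_Q3 L)).2 (Filter.Eventually.of_forall hC)

lemma cauchy_schwarz (L : ℝ) {a b : V3 → ℝ} (ha : Continuous a) (hb : Continuous b)
    (ha0 : ∀ x, 0 ≤ a x) (hb0 : ∀ x, 0 ≤ b x) :
    ∫ x in Q3 L, a x * b x
      ≤ Real.sqrt (∫ x in Q3 L, a x ^ 2) * Real.sqrt (∫ x in Q3 L, b x ^ 2) := by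
  have hpq : Real.HolderConjugate 2 2 := Real.holderConjugate_iff.mpr ⟨one_lt_two, by norm_num⟩
  have h := MeasureTheory.integral_mul_le_Lp_mul_Lq_of_nonneg hpq
    (μ := volume.restrict (Q3 L))
    (Filter.Eventually.of_forall ha0) (Filter.Eventually.of_forall hb0)
    (memL2_of_continuous L ha) (memL2_of_continuous L hb)
  have hpow : ∀ y : ℝ, y ^ (2:ℝ) = y ^ (2:ℕ) := fun y => by
    rw [show ((2:ℝ)) = ((2:ℕ):ℝ) by norm_num, Real.rpow_natCast]
  simp only [hpow] at h
  calc ∫ x in Q3 L, a x * b x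
      ≤ (∫ x in Q3 L, a x ^ 2) ^ (1/2 : ℝ) * (∫ x in Q3 L, b x ^ 2) ^ (1/2 : ℝ) := h
    _ = Real.sqrt (∫ x in Q3 L, a x ^ 2) * Real.sqrt (∫ x in Q3 L, b x ^ 2) := by
        rw [Real.sqrt_eq_rpow, Real.sqrt_eq_rpow]


lemma pd_pd_le (f : V3 → ℝ) (hf : ContDiff ℝ 2 f) (α : Fin 3) (x : V3) :
    |pd α (pd α f) x| ≤ ‖iteratedFDeriv ℝ 2 f x‖ := by
  have hff : ContDiff ℝ 1 (fderiv ℝ f) := hf.fderiv_right (by norm_num)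
  have hdx := (hff.differentiable one_ne_zero x).hasFDerivAt
  have hg : HasFDerivAt (pd α f)
      ((ContinuousLinearMap.apply ℝ ℝ (Pi.single α (1:ℝ))).comp (fderiv ℝ (fderiv ℝ f) x)) x :=
    ((ContinuousLinearMap.apply ℝ ℝ (Pi.single α (1:ℝ))
      : (V3 →L[ℝ] ℝ) →L[ℝ] ℝ)).hasFDerivAt.comp x hdx
  have heq : pd α (pd α f) x
      = iteratedFDeriv ℝ 2 f x ![Pi.single α 1, Pi.single α 1] := by
    rw [iteratedFDeriv_two_apply]
    show fderiv ℝ (pd α f) x (Pi.single α 1) = _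
    rw [hg.fderiv]
    simp [ContinuousLinearMap.comp_apply]
  rw [heq, ← Real.norm_eq_abs]
  have hle := (iteratedFDeriv ℝ 2 f x).le_opNorm ![Pi.single α 1, Pi.single α 1]
  have hprod : (∏ i : Fin 2, ‖(![Pi.single α 1, Pi.single α 1] : Fin 2 → V3) i‖) = 1 := by
    simp [Fin.prod_univ_two, Pi.norm_single]
  rw [hprod, mul_one] at hle
  exact hle

theorem gagliardo_nirenberg_step' (L : ℝ) (hL : 0 < L) :
    ∃ C : ℝ, ∀ f : V3 → ℝ,
      ContDiff ℝ 2 f → (∀ (x : V3) (i : Fin 3), f (x + Pi.single i L) = f x) →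
      ∀ α : Fin 3,
        (∫ x in Q3 L, (pd α f x) ^ 4) ^ ((1 : ℝ) / 2)
          ≤ C * (⨆ x : V3, |f x|) *
            Real.sqrt (∫ x in Q3 L,
              ((f x) ^ 2 + ‖fderiv ℝ f x‖ ^ 2 + ‖iteratedFDeriv ℝ 2 f x‖ ^ 2)) := by
  refine ⟨3, fun f hf hper α => ?_⟩
  set g : V3 → ℝ := pd α f with hg_def
  have hf1 : ContDiff ℝ 1 f := hf.of_le (by norm_num)
  have hg1 : ContDiff ℝ 1 g := by
    have hff : ContDiff ℝ 1 (fderiv ℝ f) := hf.fderiv_right (by norm_num)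
    exact hff.clm_apply contDiff_const
  have hgc : Continuous g := hg1.continuous
  have hgper : ∀ (x : V3) (i : Fin 3), g (x + Pi.single i L) = g x :=
    pd_shift f (hf1.differentiable one_ne_zero) hper α
  set h : V3 → ℝ := pd α g with hh_def
  have hhc : Continuous h := pd_continuous hg1 α
  set S := ⨆ x : V3, |f x| with hS_def
  have hfS : ∀ x, |f x| ≤ S := abs_le_sup hL f hf.continuous hper
  have hS0 : 0 ≤ S := le_trans (abs_nonneg _) (hfS 0)
  set W := Real.sqrt (∫ x in Q3 L,
      ((f x) ^ 2 + ‖fderiv ℝ f x‖ ^ 2 + ‖iteratedFDeriv ℝ 2 f x‖ ^ 2)) with hW_def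
  set X := Real.sqrt (∫ x in Q3 L, g x ^ 4) with hX_def
  set Y := Real.sqrt (∫ x in Q3 L, h x ^ 2) with hY_def
  have hA0 : 0 ≤ ∫ x in Q3 L, g x ^ 4 :=
    MeasureTheory.integral_nonneg fun x => by positivity
  have hLHS : (∫ x in Q3 L, g x ^ 4) ^ ((1:ℝ)/2) = X := by
    rw [hX_def, Real.sqrt_eq_rpow]
  -- the cubed function
  set v : V3 → ℝ := fun x => g x * (g x * g x) with hv_def
  have hv1 : ContDiff ℝ 1 v := hg1.mul (hg1.mul hg1)
  have hvper : ∀ (x : V3) (i : Fin 3), v (x + Pi.single i L) = v x := by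
    intro x i; simp only [hv_def, hgper x i]
  have hgd : Differentiable ℝ g := hg1.differentiable one_ne_zero
  have hpdv : ∀ x, pd α v x = 3 * (g x * g x) * h x := by
    intro x
    rw [hv_def]
    rw [pd_mul g (fun y => g y * g y) hgd (hgd.mul hgd) α x,
      pd_mul g g hgd hgd α x]
    show h x * (g x * g x) + g x * (h x * g x + g x * h x) = 3 * (g x * g x) * h x
    ring
  have hIBP := integral_pd_mul L hL f v hf1 hv1 hper hvper α
  have hA_eq : ∫ x in Q3 L, g x ^ 4 = ∫ x in Q3 L, pd α f x * v x := by
    refine MeasureTheory.integral_congr_ae (Filter.Eventually.of_forall fun x => ?_)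
    show g x ^ 4 = g x * (g x * (g x * g x))
    ring
  have hvcont : Continuous (pd α v) := pd_continuous hv1 α
  have hint1 : IntegrableOn (fun x => -(f x * pd α v x)) (Q3 L) :=
    (integrableOn_Q3 (hf.continuous.mul hvcont) L).neg
  have hint2 : IntegrableOn (fun x => 3 * S * (g x ^ 2 * |h x|)) (Q3 L) :=
    (integrableOn_Q3 (((hgc.pow 2).mul hhc.abs)) L).const_mul _
  have key1 : ∫ x in Q3 L, g x ^ 4 ≤ 3 * S * ∫ x in Q3 L, g x ^ 2 * |h x| := by
    rw [hA_eq, hIBP, ← MeasureTheory.integral_neg]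
    calc ∫ x in Q3 L, -(f x * pd α v x)
        ≤ ∫ x in Q3 L, 3 * S * (g x ^ 2 * |h x|) := by
          refine MeasureTheory.integral_mono hint1 hint2 fun x => ?_
          have habs : |pd α v x| = 3 * (g x * g x) * |h x| := by
            rw [hpdv x, abs_mul,
              abs_of_nonneg (by nlinarith [mul_self_nonneg (g x)] : (0:ℝ) ≤ 3 * (g x * g x))]
          have hchain : -(f x * pd α v x) ≤ S * (3 * (g x * g x) * |h x|) := by
            calc -(f x * pd α v x) ≤ |f x * pd α v x| := neg_le_abs _
              _ = |f x| * |pd α v x| := abs_mul _ _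
              _ = |f x| * (3 * (g x * g x) * |h x|) := by rw [habs]
              _ ≤ S * (3 * (g x * g x) * |h x|) :=
                  mul_le_mul_of_nonneg_right (hfS x)
                    (mul_nonneg (mul_nonneg (by norm_num) (mul_self_nonneg _)) (abs_nonneg _))
          exact le_trans hchain (le_of_eq (by ring))
      _ = 3 * S * ∫ x in Q3 L, g x ^ 2 * |h x| :=
          MeasureTheory.integral_const_mul _ _
  -- Cauchy-Schwarz
  have hCS : ∫ x in Q3 L, g x ^ 2 * |h x| ≤ X * Y := by
    have hcs := cauchy_schwarz L (a := fun x => g x ^ 2) (b := fun x => |h x|)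
      (hgc.pow 2) hhc.abs (fun x => sq_nonneg _) (fun x => abs_nonneg _)
    have e1 : ∫ x in Q3 L, (g x ^ 2) ^ 2 = ∫ x in Q3 L, g x ^ 4 := by
      refine MeasureTheory.integral_congr_ae (Filter.Eventually.of_forall fun x => ?_)
      show (g x ^ 2) ^ 2 = g x ^ 4
      ring
    have e2 : ∫ x in Q3 L, |h x| ^ 2 = ∫ x in Q3 L, h x ^ 2 := by
      refine MeasureTheory.integral_congr_ae (Filter.Eventually.of_forall fun x => ?_)
      show |h x| ^ 2 = h x ^ 2
      exact sq_abs _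
    rw [e1, e2] at hcs
    exact hcs
  -- Y ≤ W
  have hYW : Y ≤ W := by
    rw [hY_def, hW_def]
    apply Real.sqrt_le_sqrt
    refine MeasureTheory.integral_mono (integrableOn_Q3 (hhc.pow 2) L) ?_ fun x => ?_
    · exact integrableOn_Q3 (((hf.continuous.pow 2).add
        (((hf.continuous_fderiv two_ne_zero).norm.pow 2))).add
        (((hf.continuous_iteratedFDeriv (by exact_mod_cast le_rfl)).norm.pow 2))) L
    · have hb := pd_pd_le f hf α x
      have hb2 : h x ^ 2 ≤ ‖iteratedFDeriv ℝ 2 f x‖ ^ 2 := by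
        rw [← sq_abs]
        exact pow_le_pow_left₀ (abs_nonneg _) hb 2
      have h1 : (0:ℝ) ≤ f x ^ 2 := sq_nonneg _
      have h2 : (0:ℝ) ≤ ‖fderiv ℝ f x‖ ^ 2 := sq_nonneg _
      linarith
  have hX0 : 0 ≤ X := Real.sqrt_nonneg _
  have hW0 : 0 ≤ W := Real.sqrt_nonneg _
  have hXsq : X * X = ∫ x in Q3 L, g x ^ 4 := Real.mul_self_sqrt hA0
  have hchain2 : X * X ≤ (3 * S * W) * X := by
    rw [hXsq]
    calc ∫ x in Q3 L, g x ^ 4 ≤ 3 * S * ∫ x in Q3 L, g x ^ 2 * |h x| := key1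
      _ ≤ 3 * S * (X * Y) := by
          refine mul_le_mul_of_nonneg_left hCS (by positivity)
      _ ≤ 3 * S * (X * W) := by
          refine mul_le_mul_of_nonneg_left
            (mul_le_mul_of_nonneg_left hYW hX0) (by positivity)
      _ = (3 * S * W) * X := by ring
  rw [hLHS]
  rcases eq_or_lt_of_le hX0 with hXz | hXp
  · rw [← hXz]
    positivity
  · exact le_of_mul_le_mul_right hchain2 hXp

end GNaux

/-- Gagliardo–Nirenberg interpolation on `T³`: there is `C` such that for every
`f ∈ W^{2,2}(T³) ∩ L^∞(T³)` and every direction `α`, `‖∂_α f‖_{L⁴}² ≤ C ‖f‖_∞ ‖f‖_{W^{2,2}}`. -/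
theorem gagliardo_nirenberg_step (L : ℝ) (hL : 0 < L) :
    ∃ C : ℝ, ∀ f : V3 → ℝ,
      ContDiff ℝ 2 f → (∀ (x : V3) (i : Fin 3), f (x + Pi.single i L) = f x) →
      ∀ α : Fin 3,
        (∫ x in Q3 L, (pd α f x) ^ 4) ^ ((1 : ℝ) / 2)
          ≤ C * (⨆ x : V3, |f x|) *
            Real.sqrt (∫ x in Q3 L,
              ((f x) ^ 2 + ‖fderiv ℝ f x‖ ^ 2 + ‖iteratedFDeriv ℝ 2 f x‖ ^ 2)) :=
  GNaux.gagliardo_nirenberg_step' L hL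
end
end

section
/- Product estimate from interpolation: for divergence-free u ∈ W^{3,2}(T³;R³) with ‖∇u‖_{W^{2,2}} ≤ C₀‖ω‖_{W^{2,2}} and ω ∈ W^{2,2}(T³;R³) ∩ L^∞, one has ‖∂_α ω · ∂_β∂_γ u‖_{L²} ≤ C (‖∇u‖_{L^∞} + ‖ω‖_{L^∞}) ‖ω‖_{W^{2,2}} for all indices α, β, γ ∈ {1,2,3}. -/
open MeasureTheory

noncomputable section

/-- The `W^{2,2}` norm of `∇u` (derivative part of the `W^{3,2}` norm of `u`). -/
def gw22N (L : ℝ) (u : V3 → V3) : ℝ :=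
  Real.sqrt (∫ x in Q3 L,
    (‖fderiv ℝ u x‖ ^ 2 + ‖iteratedFDeriv ℝ 2 u x‖ ^ 2 + ‖iteratedFDeriv ℝ 3 u x‖ ^ 2))

section Helpers
open Set

def PerF {E : Type*} (L : ℝ) (g : V3 → E) : Prop :=
  ∀ (x : V3) (i : Fin 3), g (x + Pi.single i L) = g x

lemma Q3_eq (L : ℝ) : Q3 L = Set.Icc (0 : V3) (fun _ => L) := by
  rw [← Set.pi_univ_Icc]; rfl

lemma isCompact_Q3 (L : ℝ) : IsCompact (Q3 L) :=
  isCompact_univ_pi fun _ => isCompact_Icc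

lemma measurableSet_Q3 (L : ℝ) : MeasurableSet (Q3 L) :=
  (isCompact_Q3 L).isClosed.measurableSet

instance finQ3 (L : ℝ) : IsFiniteMeasure (volume.restrict (Q3 L)) :=
  ⟨by rw [Measure.restrict_apply_univ]; exact (isCompact_Q3 L).measure_lt_top⟩

/-- translation invariance of fderiv of a periodic function -/
lemma fderiv_shift {E : Type*} [NormedAddCommGroup E] [NormedSpace ℝ E]
    (g : V3 → E) (c : V3) (hg : ∀ y, g (y + c) = g y) (x : V3) :
    fderiv ℝ g (x + c) = fderiv ℝ g x := by
  have key : ∀ (y : V3), DifferentiableAt ℝ g (y + c) →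
      HasFDerivAt g (fderiv ℝ g (y + c)) y := by
    intro y hd
    have ht : HasFDerivAt (fun z : V3 => z + c) (ContinuousLinearMap.id ℝ V3) y :=
      (hasFDerivAt_id y).add_const c
    have hcomp : HasFDerivAt (fun z : V3 => g (z + c))
        ((fderiv ℝ g (y + c)).comp (ContinuousLinearMap.id ℝ V3)) y :=
      HasFDerivAt.comp y hd.hasFDerivAt ht
    have heq : (fun z : V3 => g (z + c)) = g := funext fun z => hg z
    rw [heq, ContinuousLinearMap.comp_id] at hcomp
    exact hcomp
  by_cases hd : DifferentiableAt ℝ g (x + c)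
  · exact ((key x hd).fderiv).symm
  · have hd2 : ¬ DifferentiableAt ℝ g x := by
      intro hx
      apply hd
      have hsub : DifferentiableAt ℝ (fun z : V3 => z - c) (x + c) :=
        differentiableAt_id.sub_const c
      have hx' : DifferentiableAt ℝ g ((fun z : V3 => z - c) (x + c)) := by simpa using hx
      have hcomp : DifferentiableAt ℝ (fun z : V3 => g (z - c)) (x + c) :=
        DifferentiableAt.comp _ hx' hsub
      have heq : (fun z : V3 => g (z - c)) = g := funext fun z => by rw [← hg (z - c)]; simp
      rwa [heq] at hcomp
    rw [fderiv_zero_of_not_differentiableAt hd, fderiv_zero_of_not_differentiableAt hd2]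

lemma PerF.fderivPer {E : Type*} [NormedAddCommGroup E] [NormedSpace ℝ E] {L : ℝ}
    {g : V3 → E} (hper : PerF L g) : PerF L (fun x => fderiv ℝ g x) := fun x i =>
  fderiv_shift g (Pi.single i L) (fun y => hper y i) x

lemma PerF.pdPer {L : ℝ} {g : V3 → ℝ} (hper : PerF L g) (j : Fin 3) : PerF L (pd j g) :=
  fun x i => by
    show fderiv ℝ g (x + Pi.single i L) (Pi.single j 1) = fderiv ℝ g x (Pi.single j 1)
    rw [fderiv_shift g (Pi.single i L) (fun y => hper y i) x]

lemma PerF.mul {L : ℝ} {g h : V3 → ℝ} (hg : PerF L g) (hh : PerF L h) :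
    PerF L (fun x => g x * h x) := fun x i => by simp only [hg x i, hh x i]

lemma PerF.compProj {L : ℝ} {f : V3 → V3} (hf : PerF L f) (i : Fin 3) :
    PerF L (fun x => f x i) := fun x j => by
      show f (x + Pi.single j L) i = f x i; rw [hf x j]

/-- the evaluation CLM `M ↦ M v` -/
def evalCLM (j : Fin 3) : (V3 →L[ℝ] ℝ) →L[ℝ] ℝ :=
  ContinuousLinearMap.apply ℝ ℝ (Pi.single j 1)

lemma norm_evalCLM_le (j : Fin 3) : ‖evalCLM j‖ ≤ 1 := by
  refine ContinuousLinearMap.opNorm_le_bound _ zero_le_one fun M => ?_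
  have : ‖M (Pi.single j 1)‖ ≤ ‖M‖ * ‖(Pi.single j 1 : V3)‖ := M.le_opNorm _
  simpa [Pi.norm_single, evalCLM] using this

lemma pd_eq_comp (j : Fin 3) (g : V3 → ℝ) : pd j g = (evalCLM j) ∘ (fderiv ℝ g) := rfl

lemma pd_contDiff {n : ℕ} {g : V3 → ℝ} (hg : ContDiff ℝ (n + 1) g) (j : Fin 3) :
    ContDiff ℝ n (pd j g) := by
  rw [pd_eq_comp]
  exact (evalCLM j).contDiff.comp (hg.fderiv_right (by norm_cast))

lemma pd_norm_le {n : ℕ} {g : V3 → ℝ} (hg : ContDiff ℝ (n + 1) g) (j : Fin 3) (x : V3) :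
    ‖iteratedFDeriv ℝ n (pd j g) x‖ ≤ ‖iteratedFDeriv ℝ (n + 1) g x‖ := by
  rw [pd_eq_comp]
  have hf : ContDiff ℝ n (fderiv ℝ g) := hg.fderiv_right (by norm_cast)
  rw [(evalCLM j).iteratedFDeriv_comp_left hf.contDiffAt le_rfl]
  refine le_trans (ContinuousLinearMap.norm_compContinuousMultilinearMap_le (evalCLM j)
    (iteratedFDeriv ℝ n (fderiv ℝ g) x)) ?_
  rw [← norm_iteratedFDeriv_fderiv (f := g)]
  exact mul_le_of_le_one_left (norm_nonneg _) (norm_evalCLM_le j)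

lemma proj_norm_le (i : Fin 3) : ‖(ContinuousLinearMap.proj i : V3 →L[ℝ] ℝ)‖ ≤ 1 := by
  refine ContinuousLinearMap.opNorm_le_bound _ zero_le_one fun x => ?_
  simpa using norm_le_pi_norm x i

lemma comp_proj_contDiff {n : ℕ∞} {f : V3 → V3} (hf : ContDiff ℝ n f) (i : Fin 3) :
    ContDiff ℝ n (fun x => f x i) :=
  (ContinuousLinearMap.proj i : V3 →L[ℝ] ℝ).contDiff.comp hf

lemma comp_proj_norm_le {n : ℕ} {N : ℕ} {f : V3 → V3} (hf : ContDiff ℝ N f) (hn : n ≤ N)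
    (i : Fin 3) (x : V3) :
    ‖iteratedFDeriv ℝ n (fun x => f x i) x‖ ≤ ‖iteratedFDeriv ℝ n f x‖ := by
  have : (fun x => f x i) = (ContinuousLinearMap.proj i : V3 →L[ℝ] ℝ) ∘ f := rfl
  rw [this, (ContinuousLinearMap.proj i : V3 →L[ℝ] ℝ).iteratedFDeriv_comp_left hf.contDiffAt
    (by exact_mod_cast hn)]
  refine le_trans (ContinuousLinearMap.norm_compContinuousMultilinearMap_le
    (ContinuousLinearMap.proj i : V3 →L[ℝ] ℝ) (iteratedFDeriv ℝ n f x)) ?_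
  exact mul_le_of_le_one_left (norm_nonneg _) (proj_norm_le i)

lemma PerF.int_shift {E : Type*} [NormedAddCommGroup E] {L : ℝ} {F : V3 → E}
    (hF : PerF L F) (k : ℤ) (x : V3) (i : Fin 3) :
    F (x + Pi.single i (-((k : ℝ) * L))) = F x := by
  have hper : Function.Periodic (fun t : ℝ => F (x + Pi.single i t)) L := by
    intro t
    show F (x + Pi.single i (t + L)) = F (x + Pi.single i t)
    have h : x + Pi.single i (t + L) = (x + Pi.single i t) + Pi.single i L := by
      rw [Pi.single_add, add_assoc]
    rw [h, hF _ i]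
  have := hper.sub_int_mul_eq (x := (0:ℝ)) (n := k)
  simpa using this

lemma PerF.exists_rep {E : Type*} [NormedAddCommGroup E] {L : ℝ} (hL : 0 < L) {F : V3 → E}
    (hF : PerF L F) (x : V3) : ∃ y ∈ Q3 L, F y = F x := by
  classical
  set k : Fin 3 → ℤ := fun i => ⌊x i / L⌋ with hk
  set y : V3 := fun i => x i - (k i : ℝ) * L with hy
  refine ⟨y, ?_, ?_⟩
  · intro i _
    constructor
    · have := Int.sub_floor_div_mul_nonneg (x i) hL
      simpa [hy, hk] using this
    · have := Int.sub_floor_div_mul_lt (x i) hL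
      exact le_of_lt (by simpa [hy, hk] using this)
  · have hdecomp : y = ((x + Pi.single 0 (-((k 0 : ℝ) * L))) + Pi.single 1 (-((k 1 : ℝ) * L)))
        + Pi.single 2 (-((k 2 : ℝ) * L)) := by
      funext m
      fin_cases m <;> simp [hy, Pi.single_apply] <;> ring
    rw [hdecomp, hF.int_shift (k 2), hF.int_shift (k 1), hF.int_shift (k 0)]

lemma PerF.norm_le_iSup {E : Type*} [NormedAddCommGroup E] {L : ℝ} (hL : 0 < L) {F : V3 → E}
    (hF : PerF L F) (hc : Continuous F) (x : V3) : ‖F x‖ ≤ ⨆ y : V3, ‖F y‖ := by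
  have hbdd : BddAbove (Set.range fun y : V3 => ‖F y‖) := by
    have himg : IsCompact ((fun y : V3 => ‖F y‖) '' Q3 L) :=
      (isCompact_Q3 L).image (hc.norm)
    refine himg.bddAbove.mono ?_
    rintro r ⟨z, rfl⟩
    obtain ⟨w, hw, hwz⟩ := hF.exists_rep hL z
    exact ⟨w, hw, by simp only []; rw [hwz]⟩
  exact le_ciSup hbdd x

lemma PerF.iSup_nonneg {E : Type*} [NormedAddCommGroup E] {L : ℝ} (hL : 0 < L) {F : V3 → E}
    (hF : PerF L F) (hc : Continuous F) : 0 ≤ ⨆ y : V3, ‖F y‖ :=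
  le_trans (norm_nonneg (F 0)) (hF.norm_le_iSup hL hc 0)

lemma contDiff_one_of_pd {g : V3 → ℝ} (hg : ContDiff ℝ 1 g) (j : Fin 3) :
    Continuous (pd j g) := (pd_contDiff (n := 0) hg j).continuous

lemma insertNth_front_eq {L : ℝ} (α : Fin 3) (x : Fin 2 → ℝ) :
    (Fin.insertNth α L x : V3) = (Fin.insertNth α (0:ℝ) x : V3) + Pi.single α L := by
  funext p
  refine Fin.succAboveCases α ?_ ?_ p
  · simp
  · intro j
    simp [Fin.insertNth_apply_succAbove, Pi.single_eq_of_ne (Fin.succAbove_ne α j)]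

/-- On the torus, the integral of a partial derivative of a periodic `C¹` function vanishes. -/
lemma integral_pd_eq_zero {L : ℝ} (hL : 0 < L) {ψ : V3 → ℝ} (hψ : ContDiff ℝ 1 ψ)
    (hper : PerF L ψ) (α : Fin 3) : ∫ x in Q3 L, pd α ψ x = 0 := by
  classical
  set f : Fin 3 → V3 → ℝ := fun i => if i = α then ψ else 0 with hf
  set f' : Fin 3 → V3 → V3 →L[ℝ] ℝ := fun i => if i = α then fderiv ℝ ψ else 0 with hf'
  have hle : (0 : V3) ≤ (fun _ => L) := fun i => le_of_lt hL
  have hsum : ∀ x : V3, ∑ i : Fin 3, f' i x (Pi.single i 1) = pd α ψ x := by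
    intro x
    rw [Finset.sum_eq_single α]
    · simp [hf', pd]
    · intro b _ hb; simp [hf', hb]
    · intro h; exact absurd (Finset.mem_univ α) h
  have Hc : ∀ i, ContinuousOn (f i) (Set.Icc (0 : V3) (fun _ => L)) := by
    intro i
    by_cases h : i = α <;> simp [hf, h]
    · exact hψ.continuous.continuousOn
    · exact continuousOn_const
  have Hd : ∀ x ∈ (Set.pi Set.univ fun i => Set.Ioo ((0:V3) i) L) \ (∅ : Set V3),
      ∀ i, HasFDerivAt (f i) (f' i x) x := by
    intro x _ i
    by_cases h : i = α
    · simp only [hf, hf', h, if_pos rfl]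
      exact (hψ.differentiable one_ne_zero x).hasFDerivAt
    · simp only [hf, hf', if_neg h]
      exact hasFDerivAt_const (0:ℝ) x
  have Hi : IntegrableOn (fun x => ∑ i : Fin 3, f' i x (Pi.single i 1))
      (Set.Icc (0 : V3) (fun _ => L)) volume := by
    have : IntegrableOn (pd α ψ) (Set.Icc (0 : V3) (fun _ => L)) volume := by
      rw [← Q3_eq]
      exact (contDiff_one_of_pd hψ α).continuousOn.integrableOn_compact (isCompact_Q3 L)
    exact this.congr_fun (fun x _ => (hsum x).symm) measurableSet_Icc
  have key := MeasureTheory.integral_divergence_of_hasFDerivAt_off_countable'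
      (n := 2) 0 (fun _ => L) hle f f' ∅ Set.countable_empty Hc Hd Hi
  have hfaces : ∀ i : Fin 3,
      ((∫ x in Set.Icc ((0:V3) ∘ Fin.succAbove i) ((fun _ => L) ∘ Fin.succAbove i),
          f i (Fin.insertNth i ((fun _ => L) i) x)) -
        ∫ x in Set.Icc ((0:V3) ∘ Fin.succAbove i) ((fun _ => L) ∘ Fin.succAbove i),
          f i (Fin.insertNth i ((0:V3) i) x)) = 0 := by
    intro i
    by_cases h : i = α
    · subst h
      have : ∀ x : Fin 2 → ℝ, f i (Fin.insertNth i ((fun _ => L) i) x)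
          = f i (Fin.insertNth i ((0:V3) i) x) := by
        intro x
        simp only [hf, if_pos rfl]
        show ψ (Fin.insertNth i L x) = ψ (Fin.insertNth i (0:ℝ) x)
        rw [insertNth_front_eq, hper]
      rw [integral_congr_ae (Filter.Eventually.of_forall fun x => this x), sub_self]
    · simp [hf, h]
  rw [integral_congr_ae (Filter.Eventually.of_forall hsum)] at key
  rw [Q3_eq]
  rw [key, Finset.sum_congr rfl fun i _ => hfaces i, Finset.sum_const, smul_zero]

/-- Integration by parts on the torus. -/
lemma integral_ibp {L : ℝ} (hL : 0 < L) {a b : V3 → ℝ} (ha : ContDiff ℝ 1 a)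
    (hb : ContDiff ℝ 1 b) (hpa : PerF L a) (hpb : PerF L b) (α : Fin 3) :
    ∫ x in Q3 L, a x * pd α b x = - ∫ x in Q3 L, pd α a x * b x := by
  have hab : ContDiff ℝ 1 (fun x => a x * b x) := ha.mul hb
  have hperab : PerF L (fun x => a x * b x) := hpa.mul hpb
  have h0 := integral_pd_eq_zero hL hab hperab α
  have hpt : ∀ x, pd α (fun y => a y * b y) x = pd α a x * b x + a x * pd α b x := by
    intro x
    show fderiv ℝ (fun y => a y * b y) x (Pi.single α 1) = _
    rw [fderiv_fun_mul (ha.differentiable one_ne_zero x) (hb.differentiable one_ne_zero x)]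
    simp only [ContinuousLinearMap.add_apply, ContinuousLinearMap.coe_smul', Pi.smul_apply,
      smul_eq_mul, pd]
    ring
  rw [integral_congr_ae (Filter.Eventually.of_forall hpt)] at h0
  have hiA : IntegrableOn (fun x => pd α a x * b x) (Q3 L) volume :=
    ((contDiff_one_of_pd ha α).mul hb.continuous).continuousOn.integrableOn_compact
      (isCompact_Q3 L)
  have hiB : IntegrableOn (fun x => a x * pd α b x) (Q3 L) volume :=
    (ha.continuous.mul (contDiff_one_of_pd hb α)).continuousOn.integrableOn_compact
      (isCompact_Q3 L)
  rw [integral_add hiA hiB] at h0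
  linarith

lemma memL2_of_continuous {L : ℝ} {F : V3 → ℝ} (hF : Continuous F) :
    MemLp F (ENNReal.ofReal 2) (volume.restrict (Q3 L)) := by
  rw [show ENNReal.ofReal 2 = 2 by norm_num]
  refine (memLp_two_iff_integrable_sq hF.aestronglyMeasurable).mpr ?_
  have : IntegrableOn (fun x => F x ^ 2) (Q3 L) volume :=
    (hF.pow 2).continuousOn.integrableOn_compact (isCompact_Q3 L)
  exact this

/-- Cauchy–Schwarz for integrals over the torus. -/
lemma cs_integral {L : ℝ} {F G : V3 → ℝ} (hF : Continuous F) (hG : Continuous G) :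
    ∫ x in Q3 L, |F x| * |G x|
      ≤ Real.sqrt (∫ x in Q3 L, F x ^ 2) * Real.sqrt (∫ x in Q3 L, G x ^ 2) := by
  have h2 : Real.HolderConjugate 2 2 := Real.HolderConjugate.two_two
  have hFm : MemLp (fun x => |F x|) (ENNReal.ofReal 2) (volume.restrict (Q3 L)) :=
    memL2_of_continuous hF.abs
  have hGm : MemLp (fun x => |G x|) (ENNReal.ofReal 2) (volume.restrict (Q3 L)) :=
    memL2_of_continuous hG.abs
  have := MeasureTheory.integral_mul_le_Lp_mul_Lq_of_nonneg h2
    (Filter.Eventually.of_forall fun x => abs_nonneg (F x))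
    (Filter.Eventually.of_forall fun x => abs_nonneg (G x)) hFm hGm
  have habs2 : ∀ y : ℝ, |y| ^ (2:ℝ) = y ^ 2 := fun y => by
    rw [show (2:ℝ) = ((2:ℕ):ℝ) by norm_num, Real.rpow_natCast, sq_abs]
  have hFsq : ∫ x in Q3 L, |F x| ^ (2:ℝ) = ∫ x in Q3 L, F x ^ 2 :=
    integral_congr_ae (Filter.Eventually.of_forall fun x => habs2 (F x))
  have hGsq : ∫ x in Q3 L, |G x| ^ (2:ℝ) = ∫ x in Q3 L, G x ^ 2 :=
    integral_congr_ae (Filter.Eventually.of_forall fun x => habs2 (G x))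
  rw [hFsq, hGsq] at this
  refine le_trans this ?_
  have h1 : (0:ℝ) ≤ ∫ x in Q3 L, F x ^ 2 := integral_nonneg fun x => sq_nonneg _
  have h2' : (0:ℝ) ≤ ∫ x in Q3 L, G x ^ 2 := integral_nonneg fun x => sq_nonneg _
  rw [← Real.sqrt_eq_rpow, ← Real.sqrt_eq_rpow]

lemma pd_cube {f : V3 → ℝ} (hf : ContDiff ℝ 1 f) (α : Fin 3) (x : V3) :
    pd α (fun y => f y ^ 3) x = 3 * f x ^ 2 * pd α f x := by
  have hd : DifferentiableAt ℝ f x := hf.differentiable one_ne_zero x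
  have h1 : (fun y => f y ^ 3) = fun y => f y * (f y * f y) := by funext y; ring
  rw [h1]
  show fderiv ℝ (fun y => f y * (f y * f y)) x (Pi.single α 1) = _
  rw [fderiv_fun_mul (d := fun y => f y * f y) hd (hd.mul hd), fderiv_fun_mul hd hd]
  simp only [ContinuousLinearMap.add_apply, ContinuousLinearMap.coe_smul', Pi.smul_apply,
    smul_eq_mul, pd]
  ring

lemma sqrt_cancel {X a : ℝ} (hX : 0 ≤ X) (ha : 0 ≤ a) (h : X ≤ a * Real.sqrt X) :
    Real.sqrt X ≤ a := by
  rcases eq_or_lt_of_le (Real.sqrt_nonneg X) with h0 | h0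
  · rw [← h0]; exact ha
  · have hXX : Real.sqrt X * Real.sqrt X = X := Real.mul_self_sqrt hX
    nlinarith

/-- The interpolation (Gagliardo–Nirenberg type) step via integration by parts. -/
lemma key_L4 {L : ℝ} (hL : 0 < L) {F : V3 → ℝ} (hF : ContDiff ℝ 2 F) (hFper : PerF L F)
    {M : ℝ} (hM : ∀ x, |F x| ≤ M) (α : Fin 3) :
    Real.sqrt (∫ x in Q3 L, pd α F x ^ 4)
      ≤ 3 * M * Real.sqrt (∫ x in Q3 L, pd α (pd α F) x ^ 2) := by
  set f := pd α F with hfdef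
  have hf1 : ContDiff ℝ 1 f := pd_contDiff (n := 1) hF α
  have hfc : Continuous f := hf1.continuous
  have hfper : PerF L f := hFper.pdPer α
  have hf'c : Continuous (pd α f) := contDiff_one_of_pd hf1 α
  have hM0 : 0 ≤ M := le_trans (abs_nonneg _) (hM 0)
  set B := Real.sqrt (∫ x in Q3 L, pd α (pd α f) x ^ 2)  -- dummy
  have ha : ContDiff ℝ 1 (fun x => f x ^ 3) := hf1.pow 3
  have haper : PerF L (fun x => f x ^ 3) := fun x i => by
    show f (x + Pi.single i L) ^ 3 = f x ^ 3; rw [hfper x i]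
  have step1 : ∫ x in Q3 L, f x ^ 4 = ∫ x in Q3 L, (f x ^ 3) * pd α F x := by
    refine integral_congr_ae (Filter.Eventually.of_forall fun x => ?_)
    rw [← hfdef]; ring
  have step2 : ∫ x in Q3 L, (f x ^ 3) * pd α F x
      = - ∫ x in Q3 L, pd α (fun y => f y ^ 3) x * F x :=
    integral_ibp hL ha (hF.of_le one_le_two) haper hFper α
  have step3 : ∫ x in Q3 L, pd α (fun y => f y ^ 3) x * F x
      = ∫ x in Q3 L, (3 * f x ^ 2 * pd α f x) * F x := by
    refine integral_congr_ae (Filter.Eventually.of_forall fun x => ?_)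
    show pd α (fun y => f y ^ 3) x * F x = 3 * f x ^ 2 * pd α f x * F x
    rw [pd_cube hf1 α x]
  have habs : - ∫ x in Q3 L, (3 * f x ^ 2 * pd α f x) * F x
      ≤ 3 * M * ∫ x in Q3 L, |f x ^ 2| * |pd α f x| := by
    have h1 : - ∫ x in Q3 L, (3 * f x ^ 2 * pd α f x) * F x
        ≤ |∫ x in Q3 L, (3 * f x ^ 2 * pd α f x) * F x| := neg_le_abs _
    have h2 : |∫ x in Q3 L, (3 * f x ^ 2 * pd α f x) * F x|
        ≤ ∫ x in Q3 L, |(3 * f x ^ 2 * pd α f x) * F x| := by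
      exact abs_integral_le_integral_abs
    have h3 : ∫ x in Q3 L, |(3 * f x ^ 2 * pd α f x) * F x|
        ≤ ∫ x in Q3 L, 3 * M * (|f x ^ 2| * |pd α f x|) := by
      refine setIntegral_mono_on ?_ ?_ (measurableSet_Q3 L) fun x _ => ?_
      · exact (((continuous_const.mul (hfc.pow 2)).mul hf'c).mul hF.continuous).abs.continuousOn
          |>.integrableOn_compact (isCompact_Q3 L)
      · exact (continuous_const.mul ((hfc.pow 2).abs.mul hf'c.abs)).continuousOn
          |>.integrableOn_compact (isCompact_Q3 L)
      · have : |(3 * f x ^ 2 * pd α f x) * F x| = 3 * (|f x ^ 2| * |pd α f x|) * |F x| := by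
          rw [abs_mul, abs_mul, abs_mul, abs_of_nonneg (by norm_num : (0:ℝ) ≤ 3)]
          ring
        rw [this]
        have hfx := hM x
        nlinarith [abs_nonneg (f x ^ 2), abs_nonneg (pd α f x),
          mul_nonneg (abs_nonneg (f x ^ 2)) (abs_nonneg (pd α f x))]
    calc - ∫ x in Q3 L, (3 * f x ^ 2 * pd α f x) * F x
        ≤ ∫ x in Q3 L, |(3 * f x ^ 2 * pd α f x) * F x| := le_trans h1 h2
      _ ≤ ∫ x in Q3 L, 3 * M * (|f x ^ 2| * |pd α f x|) := h3
      _ = 3 * M * ∫ x in Q3 L, |f x ^ 2| * |pd α f x| := by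
          rw [integral_const_mul]
  have hcs : ∫ x in Q3 L, |f x ^ 2| * |pd α f x|
      ≤ Real.sqrt (∫ x in Q3 L, f x ^ 4) * Real.sqrt (∫ x in Q3 L, pd α (pd α F) x ^ 2) := by
    have h := cs_integral (L := L) (F := fun x => f x ^ 2) (hfc.pow 2) hf'c
    have h4 : ∫ x in Q3 L, (f x ^ 2) ^ 2 = ∫ x in Q3 L, f x ^ 4 := by
      refine integral_congr_ae (Filter.Eventually.of_forall fun x => ?_); ring_nf
    rw [h4] at h
    exact h
  have hXnn : (0:ℝ) ≤ ∫ x in Q3 L, f x ^ 4 := by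
    refine integral_nonneg fun x => ?_
    have : f x ^ 4 = (f x ^ 2) ^ 2 := by ring
    rw [this]; exact sq_nonneg _
  refine sqrt_cancel hXnn (by positivity) ?_
  calc ∫ x in Q3 L, f x ^ 4
      = - ∫ x in Q3 L, (3 * f x ^ 2 * pd α f x) * F x := by rw [step1, step2, step3]
    _ ≤ 3 * M * ∫ x in Q3 L, |f x ^ 2| * |pd α f x| := habs
    _ ≤ 3 * M * (Real.sqrt (∫ x in Q3 L, f x ^ 4)
          * Real.sqrt (∫ x in Q3 L, pd α (pd α F) x ^ 2)) := by
        exact mul_le_mul_of_nonneg_left hcs (by positivity)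
    _ = 3 * M * Real.sqrt (∫ x in Q3 L, pd α (pd α F) x ^ 2)
          * Real.sqrt (∫ x in Q3 L, f x ^ 4) := by ring


end Helpers

set_option maxHeartbeats 1000000 in
/-- Product estimate from interpolation: for divergence-free `u ∈ W^{3,2}` with
`‖∇u‖_{W^{2,2}} ≤ C₀‖ω‖_{W^{2,2}}` and `ω ∈ W^{2,2} ∩ L^∞`,
`‖∂_α ω · ∂_β∂_γ u‖_{L²} ≤ C (‖∇u‖_∞ + ‖ω‖_∞) ‖ω‖_{W^{2,2}}` for all indices `α, β, γ`. -/
theorem product_estimate (L : ℝ) (hL : 0 < L) (C₀ : ℝ) (hC₀ : 0 < C₀) :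
    ∃ C : ℝ, ∀ u ω : V3 → V3,
      ContDiff ℝ 3 u → DivFree u → Periodic3 L u →
      ContDiff ℝ 2 ω → Periodic3 L ω →
      gw22N L u ≤ C₀ * w22N L ω →
      ∀ (α β γ i j : Fin 3),
        Real.sqrt (∫ x in Q3 L,
            (pd α (fun y => ω y i) x * pd β (pd γ (fun y => u y j)) x) ^ 2)
          ≤ C * (gradSup u + supN ω) * w22N L ω := by
  refine ⟨3 * Real.sqrt C₀, ?_⟩
  intro u ω hu _hdiv huper hω hωper hgw α β γ i j
  have hu3 : ContDiff ℝ ((3:ℕ):ℕ∞) u := by exact_mod_cast hu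
  have hω2 : ContDiff ℝ ((2:ℕ):ℕ∞) ω := by exact_mod_cast hω
  have peru : PerF L u := huper
  have perω : PerF L ω := hωper
  set wi : V3 → ℝ := fun y => ω y i with hwi_def
  set uj : V3 → ℝ := fun y => u y j with huj_def
  have hwi2 : ContDiff ℝ 2 wi := comp_proj_contDiff hω i
  have huj3 : ContDiff ℝ 3 uj := comp_proj_contDiff hu j
  have perwi : PerF L wi := perω.compProj i
  have peruj : PerF L uj := peru.compProj j
  set f : V3 → ℝ := pd α wi with hf_def
  set Gf : V3 → ℝ := pd γ uj with hGf_def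
  set g : V3 → ℝ := pd β Gf with hg_def
  have hGf2 : ContDiff ℝ 2 Gf := pd_contDiff (n := 2) huj3 γ
  have perGf : PerF L Gf := peruj.pdPer γ
  have hf1 : ContDiff ℝ 1 f := pd_contDiff (n := 1) hwi2 α
  have hg1 : ContDiff ℝ 1 g := pd_contDiff (n := 1) hGf2 β
  have hfc : Continuous f := hf1.continuous
  have hgc : Continuous g := hg1.continuous
  set S := supN ω with hS_def
  set Gs := gradSup u with hGs_def
  set W := w22N L ω with hW_def
  have hWnn : 0 ≤ W := Real.sqrt_nonneg _
  -- sup bounds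
  have hSbd : ∀ x, |wi x| ≤ S := by
    intro x
    have h1 : |wi x| ≤ ‖ω x‖ := by
      simpa [Real.norm_eq_abs] using norm_le_pi_norm (ω x) i
    exact le_trans h1 (perω.norm_le_iSup hL hω.continuous x)
  have hSnn : 0 ≤ S := le_trans (abs_nonneg _) (hSbd 0)
  have hfderiv_cont : Continuous (fun x => fderiv ℝ u x) :=
    hu.continuous_fderiv (by norm_num)
  have hGbd : ∀ x, |Gf x| ≤ Gs := by
    intro x
    have h0 : |Gf x| ≤ ‖iteratedFDeriv ℝ 1 uj x‖ := by
      have := pd_norm_le (n := 0) (huj3.of_le (by norm_num)) γ x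
      simpa [norm_iteratedFDeriv_zero, Real.norm_eq_abs] using this
    have h1 : ‖iteratedFDeriv ℝ 1 uj x‖ ≤ ‖iteratedFDeriv ℝ 1 u x‖ :=
      comp_proj_norm_le hu3 (by norm_num) j x
    have h2 : ‖iteratedFDeriv ℝ 1 u x‖ = ‖fderiv ℝ u x‖ := by
      have h3 := norm_iteratedFDeriv_fderiv (𝕜 := ℝ) (f := u) (n := 0) (x := x)
      rw [norm_iteratedFDeriv_zero] at h3
      exact h3.symm
    have h4 : ‖fderiv ℝ u x‖ ≤ Gs :=
      peru.fderivPer.norm_le_iSup hL hfderiv_cont x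
    calc |Gf x| ≤ ‖iteratedFDeriv ℝ 1 uj x‖ := h0
      _ ≤ ‖iteratedFDeriv ℝ 1 u x‖ := h1
      _ = ‖fderiv ℝ u x‖ := h2
      _ ≤ Gs := h4
  have hGnn : 0 ≤ Gs := le_trans (abs_nonneg _) (hGbd 0)
  -- the two interpolation estimates
  have hKf : Real.sqrt (∫ x in Q3 L, f x ^ 4)
      ≤ 3 * S * Real.sqrt (∫ x in Q3 L, pd α f x ^ 2) := by
    have := key_L4 hL hwi2 perwi hSbd α
    simpa [← hf_def] using this
  have hKg : Real.sqrt (∫ x in Q3 L, g x ^ 4)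
      ≤ 3 * Gs * Real.sqrt (∫ x in Q3 L, pd β g x ^ 2) := by
    have := key_L4 hL hGf2 perGf hGbd β
    simpa [← hg_def] using this
  -- bounding the second factors by Sobolev norms
  have hB1 : Real.sqrt (∫ x in Q3 L, pd α f x ^ 2) ≤ W := by
    have hpt : ∀ x, pd α f x ^ 2 ≤ ‖ω x‖ ^ 2 + ‖fderiv ℝ ω x‖ ^ 2
        + ‖iteratedFDeriv ℝ 2 ω x‖ ^ 2 := by
      intro x
      have h0 : |pd α f x| ≤ ‖iteratedFDeriv ℝ 1 f x‖ := by
        simpa [norm_iteratedFDeriv_zero, Real.norm_eq_abs] using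
          pd_norm_le (n := 0) hf1 α x
      have h1 : ‖iteratedFDeriv ℝ 1 f x‖ ≤ ‖iteratedFDeriv ℝ 2 wi x‖ :=
        pd_norm_le (n := 1) hwi2 α x
      have h2 : ‖iteratedFDeriv ℝ 2 wi x‖ ≤ ‖iteratedFDeriv ℝ 2 ω x‖ :=
        comp_proj_norm_le hω2 le_rfl i x
      have habs : |pd α f x| ≤ ‖iteratedFDeriv ℝ 2 ω x‖ := le_trans h0 (le_trans h1 h2)
      have hsq : pd α f x ^ 2 ≤ ‖iteratedFDeriv ℝ 2 ω x‖ ^ 2 := by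
        have := sq_abs (pd α f x)
        nlinarith [abs_nonneg (pd α f x), norm_nonneg (iteratedFDeriv ℝ 2 ω x)]
      nlinarith [sq_nonneg ‖ω x‖, sq_nonneg ‖fderiv ℝ ω x‖]
    have hint : ∫ x in Q3 L, pd α f x ^ 2 ≤ ∫ x in Q3 L, (‖ω x‖ ^ 2
        + ‖fderiv ℝ ω x‖ ^ 2 + ‖iteratedFDeriv ℝ 2 ω x‖ ^ 2) := by
      refine setIntegral_mono_on ?_ ?_ (measurableSet_Q3 L) fun x _ => hpt x
      · exact ((contDiff_one_of_pd hf1 α).pow 2).continuousOn.integrableOn_compact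
          (isCompact_Q3 L)
      · have hc : Continuous fun x => ‖ω x‖ ^ 2 + ‖fderiv ℝ ω x‖ ^ 2
            + ‖iteratedFDeriv ℝ 2 ω x‖ ^ 2 := by
          have c1 : Continuous fun x => fderiv ℝ ω x := hω.continuous_fderiv (by norm_num)
          have c2 : Continuous fun x => iteratedFDeriv ℝ 2 ω x :=
            hω.continuous_iteratedFDeriv (by norm_num)
          exact ((hω.continuous.norm.pow 2).add (c1.norm.pow 2)).add (c2.norm.pow 2)
        exact hc.continuousOn.integrableOn_compact (isCompact_Q3 L)
    exact Real.sqrt_le_sqrt hint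
  have hB2 : Real.sqrt (∫ x in Q3 L, pd β g x ^ 2) ≤ C₀ * W := by
    have hpt : ∀ x, pd β g x ^ 2 ≤ ‖fderiv ℝ u x‖ ^ 2 + ‖iteratedFDeriv ℝ 2 u x‖ ^ 2
        + ‖iteratedFDeriv ℝ 3 u x‖ ^ 2 := by
      intro x
      have h0 : |pd β g x| ≤ ‖iteratedFDeriv ℝ 1 g x‖ := by
        simpa [norm_iteratedFDeriv_zero, Real.norm_eq_abs] using
          pd_norm_le (n := 0) hg1 β x
      have h1 : ‖iteratedFDeriv ℝ 1 g x‖ ≤ ‖iteratedFDeriv ℝ 2 Gf x‖ :=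
        pd_norm_le (n := 1) hGf2 β x
      have h2 : ‖iteratedFDeriv ℝ 2 Gf x‖ ≤ ‖iteratedFDeriv ℝ 3 uj x‖ :=
        pd_norm_le (n := 2) huj3 γ x
      have h3 : ‖iteratedFDeriv ℝ 3 uj x‖ ≤ ‖iteratedFDeriv ℝ 3 u x‖ :=
        comp_proj_norm_le hu3 le_rfl j x
      have habs : |pd β g x| ≤ ‖iteratedFDeriv ℝ 3 u x‖ :=
        le_trans h0 (le_trans h1 (le_trans h2 h3))
      have hsq : pd β g x ^ 2 ≤ ‖iteratedFDeriv ℝ 3 u x‖ ^ 2 := by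
        nlinarith [abs_nonneg (pd β g x), norm_nonneg (iteratedFDeriv ℝ 3 u x),
          sq_abs (pd β g x)]
      nlinarith [sq_nonneg ‖fderiv ℝ u x‖, sq_nonneg ‖iteratedFDeriv ℝ 2 u x‖]
    have hint : ∫ x in Q3 L, pd β g x ^ 2 ≤ ∫ x in Q3 L, (‖fderiv ℝ u x‖ ^ 2
        + ‖iteratedFDeriv ℝ 2 u x‖ ^ 2 + ‖iteratedFDeriv ℝ 3 u x‖ ^ 2) := by
      refine setIntegral_mono_on ?_ ?_ (measurableSet_Q3 L) fun x _ => hpt x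
      · exact ((contDiff_one_of_pd hg1 β).pow 2).continuousOn.integrableOn_compact
          (isCompact_Q3 L)
      · have hc : Continuous fun x => ‖fderiv ℝ u x‖ ^ 2 + ‖iteratedFDeriv ℝ 2 u x‖ ^ 2
            + ‖iteratedFDeriv ℝ 3 u x‖ ^ 2 := by
          have c1 : Continuous fun x => fderiv ℝ u x := hu.continuous_fderiv (by norm_num)
          have c2 : Continuous fun x => iteratedFDeriv ℝ 2 u x :=
            hu.continuous_iteratedFDeriv (by norm_num)
          have c3 : Continuous fun x => iteratedFDeriv ℝ 3 u x :=
            hu.continuous_iteratedFDeriv (by norm_num)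
          exact ((c1.norm.pow 2).add (c2.norm.pow 2)).add (c3.norm.pow 2)
        exact hc.continuousOn.integrableOn_compact (isCompact_Q3 L)
    exact le_trans (Real.sqrt_le_sqrt hint) hgw
  -- combine
  have hA : Real.sqrt (∫ x in Q3 L, f x ^ 4) ≤ 3 * S * W := by
    refine le_trans hKf ?_
    exact mul_le_mul_of_nonneg_left hB1 (by positivity)
  have hBq : Real.sqrt (∫ x in Q3 L, g x ^ 4) ≤ 3 * Gs * (C₀ * W) := by
    refine le_trans hKg ?_
    exact mul_le_mul_of_nonneg_left hB2 (by positivity)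
  have hcs : ∫ x in Q3 L, (f x * g x) ^ 2
      ≤ Real.sqrt (∫ x in Q3 L, f x ^ 4) * Real.sqrt (∫ x in Q3 L, g x ^ 4) := by
    have h := cs_integral (L := L) (F := fun x => f x ^ 2) (G := fun x => g x ^ 2) (hfc.pow 2) (hgc.pow 2)
    have e1 : ∫ x in Q3 L, (f x * g x) ^ 2 = ∫ x in Q3 L, |f x ^ 2| * |g x ^ 2| := by
      refine integral_congr_ae (Filter.Eventually.of_forall fun x => ?_)
      show (f x * g x) ^ 2 = |f x ^ 2| * |g x ^ 2|
      rw [abs_of_nonneg (sq_nonneg (f x)), abs_of_nonneg (sq_nonneg (g x))]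
      ring
    have e2 : ∫ x in Q3 L, (f x ^ 2) ^ 2 = ∫ x in Q3 L, f x ^ 4 := by
      refine integral_congr_ae (Filter.Eventually.of_forall fun x => ?_); ring_nf
    have e3 : ∫ x in Q3 L, (g x ^ 2) ^ 2 = ∫ x in Q3 L, g x ^ 4 := by
      refine integral_congr_ae (Filter.Eventually.of_forall fun x => ?_); ring_nf
    rw [e2, e3] at h
    rw [e1]
    exact h
  have hprod : ∫ x in Q3 L, (f x * g x) ^ 2 ≤ 9 * C₀ * S * Gs * W ^ 2 := by
    have hAnn : 0 ≤ Real.sqrt (∫ x in Q3 L, f x ^ 4) := Real.sqrt_nonneg _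
    have hBnn : 0 ≤ Real.sqrt (∫ x in Q3 L, g x ^ 4) := Real.sqrt_nonneg _
    have := mul_le_mul hA hBq hBnn (by positivity)
    calc ∫ x in Q3 L, (f x * g x) ^ 2
        ≤ Real.sqrt (∫ x in Q3 L, f x ^ 4) * Real.sqrt (∫ x in Q3 L, g x ^ 4) := hcs
      _ ≤ (3 * S * W) * (3 * Gs * (C₀ * W)) := this
      _ = 9 * C₀ * S * Gs * W ^ 2 := by ring
  have hfinal : Real.sqrt (∫ x in Q3 L, (f x * g x) ^ 2)
      ≤ 3 * Real.sqrt C₀ * (Gs + S) * W := by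
    have h1 : Real.sqrt (∫ x in Q3 L, (f x * g x) ^ 2)
        ≤ Real.sqrt (9 * C₀ * S * Gs * W ^ 2) := Real.sqrt_le_sqrt hprod
    refine le_trans h1 ?_
    rw [show (3 * Real.sqrt C₀ * (Gs + S) * W)
        = Real.sqrt ((3 * Real.sqrt C₀ * (Gs + S) * W) ^ 2) from
      (Real.sqrt_sq (by positivity)).symm]
    apply Real.sqrt_le_sqrt
    have hsq : Real.sqrt C₀ ^ 2 = C₀ := Real.sq_sqrt hC₀.le
    nlinarith [mul_nonneg (mul_nonneg hC₀.le (sq_nonneg W))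
      (add_nonneg (add_nonneg (sq_nonneg Gs) (mul_nonneg hGnn hSnn)) (sq_nonneg S)),
      sq_nonneg W, mul_nonneg hGnn hSnn]
  exact hfinal
end
end
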